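/- Let M be a real symmetric positive definite 2n×2n matrix with n×n blocks M = [[M_XX, M_XP],[M_PX, M_PP]] and let Ω := {z ∈ ℝ^{2n} : Mz·z ≤ ℏ}. Then the orthogonal projection of Ω onto the x-coordinate subspace ℝⁿ × 0 is {x ∈ ℝⁿ : (M/M_PP)x·x ≤ ℏ}, and the orthogonal projection of Ω onto the p-coordinate subspace 0 × ℝⁿ is {p ∈ ℝⁿ : (M/M_XX)p·p ≤ ℏ}. -/

import Mathlib

open Matrix Set

noncomputable section

lemma swap_dot {n : ℕ} (M : Matrix (Fin n) (Fin n) ℝ) (u v : Fin n → ℝ) :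
    M *ᵥ u ⬝ᵥ v = u ⬝ᵥ Mᵀ *ᵥ v := by
  rw [Matrix.dotProduct_mulVec, Matrix.vecMul_transpose]

lemma elim_ne_zero {n : ℕ} {p : Fin n → ℝ} (hp : p ≠ 0) :
    Sum.elim (0 : Fin n → ℝ) p ≠ 0 := by
  intro h
  apply hp
  funext i
  have := congrFun h (Sum.inr i)
  simpa using this

lemma aux {n : ℕ} (ℏ : ℝ) (A B C D : Matrix (Fin n) (Fin n) ℝ)
    (hM : (Matrix.fromBlocks A B C D).PosDef) (x : Fin n → ℝ) :
    (∃ p, (Matrix.fromBlocks A B C D).mulVec (Sum.elim x p) ⬝ᵥ Sum.elim x p ≤ ℏ)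
      ↔ (A - B * D⁻¹ * C).mulVec x ⬝ᵥ x ≤ ℏ := by
  have hH := hM.1
  rw [Matrix.isHermitian_fromBlocks_iff] at hH
  obtain ⟨hA, hBC, hCB, hD⟩ := hH
  have hBt : Bᵀ = C := by simpa using hBC
  have hCt : Cᵀ = B := by simpa using hCB
  have hDt : Dᵀ = D := hD
  -- D is positive definite
  have hDpd : D.PosDef := by
    refine Matrix.PosDef.of_dotProduct_mulVec_pos hD (fun p hp => ?_)
    have := hM.dotProduct_mulVec_pos (x := Sum.elim 0 p) (elim_ne_zero hp)
    simpa [Matrix.fromBlocks_mulVec, sumElim_dotProduct_sumElim] using this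
  have hDdet : IsUnit D.det := hDpd.det_pos.ne'.isUnit
  have hDDinv : D * D⁻¹ = 1 := Matrix.mul_nonsing_inv D hDdet
  set w : Fin n → ℝ := (D⁻¹ * C).mulVec x with hw
  have hDw : D.mulVec w = C.mulVec x := by
    rw [hw, Matrix.mulVec_mulVec, ← Matrix.mul_assoc, hDDinv, Matrix.one_mul]
  -- key identity
  have key : ∀ p : Fin n → ℝ,
      (Matrix.fromBlocks A B C D).mulVec (Sum.elim x p) ⬝ᵥ Sum.elim x p
        = (A - B * D⁻¹ * C).mulVec x ⬝ᵥ x + D.mulVec (p + w) ⬝ᵥ (p + w) := by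
    intro p
    have hBw : (B * D⁻¹ * C).mulVec x = B.mulVec w := by
      rw [hw, Matrix.mulVec_mulVec, Matrix.mul_assoc]
    have h1 : D.mulVec p ⬝ᵥ w = B.mulVec p ⬝ᵥ x := by
      rw [swap_dot, hDt, hDw, swap_dot, hBt]
    have h2 : D.mulVec w ⬝ᵥ w = (B * D⁻¹ * C).mulVec x ⬝ᵥ x := by
      rw [hDw, hBw, swap_dot, hCt, dotProduct_comm]
    have h3 : D.mulVec w ⬝ᵥ p = C.mulVec x ⬝ᵥ p := by rw [hDw]
    simp only [Matrix.fromBlocks_mulVec, sumElim_dotProduct_sumElim,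
      Matrix.sub_mulVec, Matrix.mulVec_add, Matrix.add_mulVec, add_dotProduct,
      dotProduct_add, sub_dotProduct, Sum.elim_comp_inl, Sum.elim_comp_inr]
    linarith [h1, h2, h3]
  constructor
  · rintro ⟨p, hp⟩
    have hq : (0:ℝ) ≤ D.mulVec (p + w) ⬝ᵥ (p + w) := by
      rcases eq_or_ne (p + w) 0 with h | h
      · simp [h]
      · have := hDpd.dotProduct_mulVec_pos h
        rw [dotProduct_comm]
        simpa using this.le
    have := key p
    linarith
  · intro hx
    refine ⟨-w, ?_⟩
    rw [key (-w)]
    simp [hx]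

lemma swapQ {n : ℕ} (A B C D : Matrix (Fin n) (Fin n) ℝ) (x p : Fin n → ℝ) :
    (Matrix.fromBlocks D C B A).mulVec (Sum.elim p x) ⬝ᵥ Sum.elim p x
      = (Matrix.fromBlocks A B C D).mulVec (Sum.elim x p) ⬝ᵥ Sum.elim x p := by
  simp only [Matrix.fromBlocks_mulVec, sumElim_dotProduct_sumElim,
    add_dotProduct, Sum.elim_comp_inl, Sum.elim_comp_inr]
  ring

lemma swapPD {n : ℕ} {A B C D : Matrix (Fin n) (Fin n) ℝ}
    (hM : (Matrix.fromBlocks A B C D).PosDef) :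
    (Matrix.fromBlocks D C B A).PosDef := by
  have hH := hM.1
  rw [Matrix.isHermitian_fromBlocks_iff] at hH
  obtain ⟨hA, hBC, hCB, hD⟩ := hH
  refine Matrix.PosDef.of_dotProduct_mulVec_pos (Matrix.IsHermitian.fromBlocks hD hCB hA) (fun z hz => ?_)
  have hz' : Sum.elim (z ∘ Sum.inr) (z ∘ Sum.inl) ≠ 0 := by
    intro h
    apply hz
    funext i
    cases i with
    | inl i => exact congrFun h (Sum.inr i)
    | inr i => exact congrFun h (Sum.inl i)
  have hzeq : Sum.elim (z ∘ Sum.inl) (z ∘ Sum.inr) = z := by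
    funext i; cases i <;> rfl
  have := hM.dotProduct_mulVec_pos hz'
  have hq := swapQ A B C D (z ∘ Sum.inr) (z ∘ Sum.inl)
  rw [hzeq] at hq
  have h2 : 0 < (Matrix.fromBlocks D C B A).mulVec z ⬝ᵥ z := by
    rw [hq, dotProduct_comm]
    simpa using this
  rw [show star z = z from star_trivial z, dotProduct_comm]
  exact h2

theorem projections_of_ellipsoid
    {n : ℕ} (ℏ : ℝ) (hℏ : 0 < ℏ)
    (MXX MXP MPX MPP : Matrix (Fin n) (Fin n) ℝ)
    (hM : (Matrix.fromBlocks MXX MXP MPX MPP).PosDef)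
    (Ω : Set (Fin n ⊕ Fin n → ℝ))
    (hΩ : Ω = {z | (Matrix.fromBlocks MXX MXP MPX MPP).mulVec z ⬝ᵥ z ≤ ℏ}) :
    {x : Fin n → ℝ | ∃ p : Fin n → ℝ, Sum.elim x p ∈ Ω}
        = {x | (MXX - MXP * MPP⁻¹ * MPX).mulVec x ⬝ᵥ x ≤ ℏ}
    ∧ {p : Fin n → ℝ | ∃ x : Fin n → ℝ, Sum.elim x p ∈ Ω}
        = {p | (MPP - MPX * MXX⁻¹ * MXP).mulVec p ⬝ᵥ p ≤ ℏ} := by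
  subst hΩ
  constructor
  · ext x
    exact aux ℏ MXX MXP MPX MPP hM x
  · ext p
    rw [Set.mem_setOf_eq, Set.mem_setOf_eq]
    constructor
    · rintro ⟨x, hx⟩
      exact (aux ℏ MPP MPX MXP MXX (swapPD hM) p).mp
        ⟨x, by rw [swapQ]; exact hx⟩
    · intro hp
      obtain ⟨x, hx⟩ := (aux ℏ MPP MPX MXP MXX (swapPD hM) p).mpr hp
      refine ⟨x, ?_⟩
      rw [Set.mem_setOf_eq, ← swapQ]
      exact hx
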